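/- Every graph G with sim-width at most w and no induced subgraph isomorphic to K_t ⊠ K_t or K_t ⊠ S_t has mim-width at most R(R(w+1, t), R(t, t)), where R denotes the Ramsey number. -/

import Mathlib

open SimpleGraph
open scoped Classical

noncomputable section

/-- The graph `K_t ⊠ S_t`: a clique of size `t` (the `inl` part), an independent set of
size `t` (the `inr` part), joined by a perfect matching. -/
def ktst (t : ℕ) : SimpleGraph (Fin t ⊕ Fin t) :=
  SimpleGraph.fromRel (fun x y =>
    match x, y with
    | Sum.inl i, Sum.inl j => i ≠ j
    | Sum.inl i, Sum.inr j => i = j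
    | _, _ => False)

/-- The graph `K_t ⊠ K_t`: two cliques of size `t` joined by a perfect matching. -/
def ktkt (t : ℕ) : SimpleGraph (Fin t ⊕ Fin t) :=
  SimpleGraph.fromRel (fun x y =>
    match x, y with
    | Sum.inl i, Sum.inl j => i ≠ j
    | Sum.inr i, Sum.inr j => i ≠ j
    | Sum.inl i, Sum.inr j => i = j
    | _, _ => False)

/-- The cycle graph on `ZMod n`. -/
def cycleG (n : ℕ) : SimpleGraph (ZMod n) :=
  SimpleGraph.fromRel (fun x y => y = x + 1)

/-- `σ` enumerates the vertices of `G` as a co-comparability ordering. -/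
def IsCoCompOrdering {V : Type} {n : ℕ} (G : SimpleGraph V) (σ : Fin n ≃ V) : Prop :=
  ∀ i j k : Fin n, i < j → j < k → G.Adj (σ i) (σ k) →
    G.Adj (σ j) (σ i) ∨ G.Adj (σ j) (σ k)

/-- `G` contains `H` as an induced subgraph. -/
def ContainsInducedIso {V W : Type} (G : SimpleGraph V) (H : SimpleGraph W) : Prop :=
  ∃ f : W → V, Function.Injective f ∧ ∀ x y, H.Adj x y ↔ G.Adj (f x) (f y)

/-- A graph is chordal iff it has no induced cycle of length at least 4. -/
def Chordal {V : Type} (G : SimpleGraph V) : Prop :=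
  ∀ n, 4 ≤ n → ¬ ContainsInducedIso G (cycleG n)

/-- `G` contains `H` as an induced minor (via an induced minor model). -/
def HasInducedMinor {V W : Type} (G : SimpleGraph V) (H : SimpleGraph W) : Prop :=
  ∃ S : W → Set V,
    (∀ w, (G.induce (S w)).Connected) ∧
    (∀ w w', w ≠ w' → Disjoint (S w) (S w')) ∧
    (∀ w w', H.Adj w w' → ∃ a ∈ S w, ∃ b ∈ S w', G.Adj a b) ∧
    (∀ w w', w ≠ w' → ¬ H.Adj w w' → ∀ a ∈ S w, ∀ b ∈ S w', ¬ G.Adj a b)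

/-- `G` contains `K_t` as a minor (branch sets). -/
def HasCliqueMinor {V : Type} (G : SimpleGraph V) (t : ℕ) : Prop :=
  ∃ S : Fin t → Set V,
    (∀ i, (G.induce (S i)).Connected) ∧
    (∀ i j, i ≠ j → Disjoint (S i) (S j)) ∧
    (∀ i j, i ≠ j → ∃ a ∈ S i, ∃ b ∈ S j, G.Adj a b)

/-- There is an induced matching of `G` of size `m` between `A` and its complement:
the `2m` matched vertices induce exactly the `m` matching edges in `G`. -/
def IsSimMatching {V : Type} (G : SimpleGraph V) (A : Set V) (m : ℕ) : Prop :=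
  ∃ a b : Fin m → V,
    Function.Injective a ∧ Function.Injective b ∧
    (∀ i, a i ∈ A) ∧ (∀ i, b i ∉ A) ∧
    (∀ i j, G.Adj (a i) (b j) ↔ i = j) ∧
    (∀ i j, ¬ G.Adj (a i) (a j)) ∧
    (∀ i j, ¬ G.Adj (b i) (b j))

/-- There is an induced matching of size `m` in the bipartite graph `G[A, V \ A]`
of edges crossing the cut. -/
def IsMimMatching {V : Type} (G : SimpleGraph V) (A : Set V) (m : ℕ) : Prop :=
  ∃ a b : Fin m → V,
    Function.Injective a ∧ Function.Injective b ∧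
    (∀ i, a i ∈ A) ∧ (∀ i, b i ∉ A) ∧
    (∀ i j, G.Adj (a i) (b j) ↔ i = j)

def simval {V : Type} (G : SimpleGraph V) (A : Set V) : ℕ :=
  sSup {m | IsSimMatching G A m}

def mimval {V : Type} (G : SimpleGraph V) (A : Set V) : ℕ :=
  sSup {m | IsMimMatching G A m}

/-- GF(2)-rank of the `A × Aᶜ` submatrix of the adjacency matrix: the dimension of the
span of the rows of that submatrix (rows extended by zero on columns of `A`). -/
def cutrk {V : Type} [Fintype V] (G : SimpleGraph V) (A : Set V) : ℕ :=
  Module.finrank (ZMod 2) (Submodule.span (ZMod 2)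
    {r : V → ZMod 2 | ∃ a ∈ A, r = fun v => if v ∉ A ∧ G.Adj a v then 1 else 0})

/-- A branch-decomposition of a graph on vertex set `V`: a finite subcubic tree together
with an injection of `V` onto its leaves. -/
structure BranchDecomp (V : Type) [Fintype V] where
  β : Type
  finβ : Fintype β
  T : SimpleGraph β
  connected : T.Connected
  acyclic : T.IsAcyclic
  subcubic : ∀ x : β, (T.neighborSet x).ncard = 1 ∨ (T.neighborSet x).ncard = 3
  L : V → β
  inj : Function.Injective L
  leaves : ∀ x : β, (T.neighborSet x).ncard = 1 ↔ ∃ v, L v = x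

/-- The side of the cut induced by the tree edge `xy`, on the side of `x`. -/
def BranchDecomp.cut {V : Type} [Fintype V] (D : BranchDecomp V) (x y : D.β) : Set V :=
  {v | (D.T.deleteEdges {s(x, y)}).Reachable (D.L v) x}

/-- The `f`-width of a graph on vertex set `V`: minimum over branch-decompositions of the
maximum of `f` over the cuts of the decomposition. -/
def fWidth {V : Type} [Fintype V] (f : Set V → ℕ) : ℕ :=
  sInf {w | ∃ D : BranchDecomp V, ∀ x y, D.T.Adj x y → f (D.cut x y) ≤ w}

def simw {V : Type} [Fintype V] (G : SimpleGraph V) : ℕ := fWidth (simval G)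
def mimw {V : Type} [Fintype V] (G : SimpleGraph V) : ℕ := fWidth (mimval G)
def rankw {V : Type} [Fintype V] (G : SimpleGraph V) : ℕ := fWidth (cutrk G)

/-- Contraction of the edge `v₁v₂`: the vertex `v₂` is removed and `v₁` plays the role of
the contracted vertex `z`, adjacent to all former neighbors of `v₁` or `v₂`. -/
def contractE {V : Type} (G : SimpleGraph V) (v1 v2 : V) : SimpleGraph {v : V // v ≠ v2} :=
  SimpleGraph.fromRel (fun x y =>
    G.Adj x y ∨ ((x : V) = v1 ∧ G.Adj v2 y) ∨ ((y : V) = v1 ∧ G.Adj (x : V) v2))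

/-- The `(p × q)` column-clique grid. -/
def ccGrid (p q : ℕ) : SimpleGraph (Fin p × Fin q) :=
  SimpleGraph.fromRel (fun u v =>
    (u.2 = v.2) ∨ (u.1 = v.1 ∧ ((u.2 : ℕ) + 1 = v.2 ∨ (v.2 : ℕ) + 1 = u.2)))

/-- The `(p × q)` Hsu-clique chain graph. -/
def hsu (p q : ℕ) : SimpleGraph (Fin p × Fin q) :=
  SimpleGraph.fromRel (fun u v =>
    (u.2 = v.2) ∨ ((u.2 : ℕ) + 1 = v.2 ∧ u.1 ≤ v.1))

/-- The `(k × k)` grid graph. -/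
def gridG (k : ℕ) : SimpleGraph (Fin k × Fin k) :=
  SimpleGraph.fromRel (fun u v =>
    (u.1 = v.1 ∧ (u.2 : ℕ) + 1 = v.2) ∨ (u.2 = v.2 ∧ (u.1 : ℕ) + 1 = v.1))

/-- A tree-decomposition of `G`. -/
structure TreeDecomp (V : Type) (G : SimpleGraph V) where
  β : Type
  finβ : Fintype β
  T : SimpleGraph β
  connected : T.Connected
  acyclic : T.IsAcyclic
  B : β → Set V
  coverV : ∀ v : V, ∃ t, v ∈ B t
  coverE : ∀ u v, G.Adj u v → ∃ t, u ∈ B t ∧ v ∈ B t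
  coherent : ∀ v : V, (T.induce {t | v ∈ B t}).Connected

/-- Tree-width. -/
def tw {V : Type} (G : SimpleGraph V) : ℕ :=
  sInf {k | ∃ D : TreeDecomp V G, ∀ t, (D.B t).ncard ≤ k + 1}

/-- `G` is `d`-degenerate: every (induced) subgraph has a vertex of degree at most `d`. -/
def Degenerate {V : Type} (G : SimpleGraph V) (d : ℕ) : Prop :=
  ∀ S : Set V, S.Nonempty → ∃ v ∈ S, {u ∈ S | G.Adj v u}.ncard ≤ d

/-- Every graph on `N` vertices contains a clique of size `k` or an independent set of
size `l`. -/
def ramseyProp (N k l : ℕ) : Prop :=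
  ∀ G : SimpleGraph (Fin N),
    (∃ s : Finset (Fin N), G.IsNClique k s) ∨ (∃ s : Finset (Fin N), Gᶜ.IsNClique l s)

/-- The Ramsey number `R(k, l)`. -/
def ramsey (k l : ℕ) : ℕ := sInf {N | ramseyProp N k l}

/-- `G` is a circle graph: the intersection graph of chords of a circle, equivalently the
overlap graph of a family of intervals with pairwise distinct endpoints. -/
def IsCircleGraph {V : Type} (G : SimpleGraph V) : Prop :=
  ∃ a b : V → ℝ, (∀ v, a v < b v) ∧
    (∀ v w : V, v ≠ w → a v ≠ a w ∧ a v ≠ b w ∧ b v ≠ a w ∧ b v ≠ b w) ∧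
    (∀ v w, G.Adj v w ↔
      (a v < a w ∧ a w < b v ∧ b v < b w) ∨ (a w < a v ∧ a v < b w ∧ b w < b v))

/-- Vertex set of the split graph witnessing unbounded mim-width: a clique `Fin m`
together with one independent vertex for each nonempty subset of the clique. -/
abbrev splitV (m : ℕ) := Fin m ⊕ {S : Finset (Fin m) // S.Nonempty}

/-- The split graph with clique of size `m` and an independent set of size `2^m - 1`
whose vertices have pairwise distinct nonempty neighborhoods in the clique. -/
def splitG (m : ℕ) : SimpleGraph (splitV m) :=
  SimpleGraph.fromRel (fun x y =>
    match x, y with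
    | Sum.inl i, Sum.inl j => i ≠ j
    | Sum.inl i, Sum.inr S => i ∈ S.1
    | _, _ => False)

end

lemma my_clique_map' {α β : Type} (G : SimpleGraph α) (G' : SimpleGraph β) (f : α → β)
    (hf : Function.Injective f) (hadj : ∀ x y, G.Adj x y → G'.Adj (f x) (f y))
    {k : ℕ} {s : Finset α} (hs : G.IsNClique k s) : ∃ u : Finset β, G'.IsNClique k u := by
  classical
  refine ⟨s.image f, ?_, ?_⟩
  · intro x hx y hy hxy
    simp only [Finset.coe_image, Set.mem_image] at hx hy
    obtain ⟨x', hx', rfl⟩ := hx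
    obtain ⟨y', hy', rfl⟩ := hy
    exact hadj _ _ (hs.1 hx' hy' (fun h => hxy (congrArg f h)))
  · rw [Finset.card_image_of_injective _ hf]; exact hs.2

lemma my_empty_nclique {α : Type} (G : SimpleGraph α) : G.IsNClique 0 ∅ :=
  ⟨by simp [Set.Pairwise], by simp⟩

lemma my_ramsey_step {N₁ N₂ k l : ℕ} (h₁ : ramseyProp N₁ k (l+1)) (h₂ : ramseyProp N₂ (k+1) l) :
    ramseyProp (N₁ + N₂ + 1) (k+1) (l+1) := by
  classical
  intro G
  set v : Fin (N₁+N₂+1) := ⟨N₁+N₂, by omega⟩ with hv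
  set Nb : Finset (Fin (N₁+N₂+1)) := Finset.univ.filter (fun x => G.Adj v x) with hNb
  set Mb : Finset (Fin (N₁+N₂+1)) := Finset.univ.filter (fun x => x ≠ v ∧ ¬ G.Adj v x) with hMb
  have hdisj : Disjoint Nb Mb := by
    rw [Finset.disjoint_left]
    intro x hx hx'
    simp [hNb, hMb] at hx hx'
    exact hx'.2 hx
  have hunion : Nb ∪ Mb = Finset.univ.erase v := by
    ext x
    simp only [hNb, hMb, Finset.mem_union, Finset.mem_filter, Finset.mem_univ, true_and,
      Finset.mem_erase, and_true]
    constructor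
    · rintro (h | h)
      · exact (G.ne_of_adj h).symm
      · exact h.1
    · intro h
      by_cases hadj : G.Adj v x
      · exact Or.inl hadj
      · exact Or.inr ⟨h, hadj⟩
  have hcard : Nb.card + Mb.card = N₁ + N₂ := by
    rw [← Finset.card_union_of_disjoint hdisj, hunion, Finset.card_erase_of_mem (Finset.mem_univ v)]
    simp
  have hcase : N₁ ≤ Nb.card ∨ N₂ ≤ Mb.card := by omega
  rcases hcase with hc | hc
  · obtain ⟨s, hsub, hscard⟩ := Finset.exists_subset_card_eq hc
    set e : Fin N₁ → Fin (N₁+N₂+1) := fun i => (s.orderIsoOfFin hscard i : Fin (N₁+N₂+1)) with he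
    have heinj : Function.Injective e := fun i j h =>
      (s.orderIsoOfFin hscard).injective (Subtype.ext h)
    have heNb : ∀ i, G.Adj v (e i) := by
      intro i
      have := hsub (s.orderIsoOfFin hscard i).2
      simpa [hNb, he] using this
    rcases h₁ (G.comap e) with ⟨u, hu⟩ | ⟨u, hu⟩
    · left
      refine ⟨insert v (u.image e), ?_, ?_⟩
      · intro x hx y hy hxy
        simp only [Finset.coe_insert, Set.mem_insert_iff, Finset.coe_image, Set.mem_image] at hx hy
        rcases hx with rfl | ⟨i, hi, rfl⟩ <;> rcases hy with rfl | ⟨j, hj, rfl⟩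
        · exact absurd rfl hxy
        · exact heNb j
        · exact (heNb i).symm
        · exact hu.1 hi hj (fun h => hxy (congrArg e h))
      · have hvni : v ∉ u.image e := by
          simp only [Finset.mem_image, not_exists]
          intro i hi
          exact G.irrefl (hi.2 ▸ heNb i)
        rw [Finset.card_insert_of_notMem hvni, Finset.card_image_of_injective _ heinj, hu.2]
    · right
      refine my_clique_map' (G.comap e)ᶜ Gᶜ e heinj ?_ hu
      intro x y hxy
      rw [SimpleGraph.compl_adj] at hxy ⊢
      exact ⟨fun h => hxy.1 (heinj h), hxy.2⟩
  · obtain ⟨s, hsub, hscard⟩ := Finset.exists_subset_card_eq hc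
    set e : Fin N₂ → Fin (N₁+N₂+1) := fun i => (s.orderIsoOfFin hscard i : Fin (N₁+N₂+1)) with he
    have heinj : Function.Injective e := fun i j h =>
      (s.orderIsoOfFin hscard).injective (Subtype.ext h)
    have heMb : ∀ i, e i ≠ v ∧ ¬ G.Adj v (e i) := by
      intro i
      have := hsub (s.orderIsoOfFin hscard i).2
      simpa [hMb, he] using this
    rcases h₂ (G.comap e) with ⟨u, hu⟩ | ⟨u, hu⟩
    · left
      exact my_clique_map' (G.comap e) G e heinj (fun x y h => h) hu
    · right
      refine ⟨insert v (u.image e), ?_, ?_⟩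
      · intro x hx y hy hxy
        simp only [Finset.coe_insert, Set.mem_insert_iff, Finset.coe_image, Set.mem_image] at hx hy
        rcases hx with rfl | ⟨i, hi, rfl⟩ <;> rcases hy with rfl | ⟨j, hj, rfl⟩
        · exact absurd rfl hxy
        · exact (SimpleGraph.compl_adj G _ _).2 ⟨(heMb j).1.symm, (heMb j).2⟩
        · exact (SimpleGraph.compl_adj G _ _).2 ⟨(heMb i).1, fun h => (heMb i).2 h.symm⟩
        · have := hu.1 hi hj (fun h => hxy (congrArg e h))
          rw [SimpleGraph.compl_adj] at this ⊢
          exact ⟨hxy, this.2⟩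
      · have hvni : v ∉ u.image e := by
          simp only [Finset.mem_image, not_exists]
          intro i hi
          exact (heMb i).1 hi.2
        rw [Finset.card_insert_of_notMem hvni, Finset.card_image_of_injective _ heinj, hu.2]

lemma my_ramsey_exists : ∀ k l : ℕ, ∃ N, ramseyProp N k l := by
  intro k
  induction k with
  | zero => exact fun l => ⟨0, fun G => Or.inl ⟨∅, my_empty_nclique G⟩⟩
  | succ k ihk =>
    intro l
    induction l with
    | zero => exact ⟨0, fun G => Or.inr ⟨∅, my_empty_nclique Gᶜ⟩⟩
    | succ l ihl =>
      obtain ⟨N₁, h₁⟩ := ihk (l+1)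
      obtain ⟨N₂, h₂⟩ := ihl
      exact ⟨N₁ + N₂ + 1, my_ramsey_step h₁ h₂⟩

lemma my_ramseyProp_ramsey (k l : ℕ) : ramseyProp (ramsey k l) k l :=
  Nat.sInf_mem (my_ramsey_exists k l)

lemma my_clique_to_fn {N k : ℕ} (Q : Fin N → Fin N → Prop) {s : Finset (Fin N)} (hcard : s.card = k)
    (hpair : ∀ x ∈ s, ∀ y ∈ s, x ≠ y → Q x y) :
    ∃ e : Fin k → Fin N, Function.Injective e ∧ ∀ i j, i ≠ j → Q (e i) (e j) := by
  refine ⟨fun i => (s.orderIsoOfFin hcard i : Fin N), fun i j h =>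
    (s.orderIsoOfFin hcard).injective (Subtype.ext h), fun i j hij => ?_⟩
  exact hpair _ (s.orderIsoOfFin hcard i).2 _ (s.orderIsoOfFin hcard j).2
    (fun h => hij ((s.orderIsoOfFin hcard).injective (Subtype.ext h)))

lemma my_ramsey_fn {N k l : ℕ} (h : ramseyProp N k l) (P : Fin N → Fin N → Prop)
    (hsym : ∀ i j, P i j → P j i) :
    (∃ e : Fin k → Fin N, Function.Injective e ∧ ∀ i j, i ≠ j → P (e i) (e j)) ∨
    (∃ e : Fin l → Fin N, Function.Injective e ∧ ∀ i j, i ≠ j → ¬ P (e i) (e j)) := by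
  classical
  let H : SimpleGraph (Fin N) :=
    { Adj := fun i j => i ≠ j ∧ P i j,
      symm := ⟨fun i j hij => ⟨hij.1.symm, hsym _ _ hij.2⟩⟩,
      loopless := ⟨fun i hi => hi.1 rfl⟩ }
  rcases h H with ⟨s, hs⟩ | ⟨s, hs⟩
  · left
    exact my_clique_to_fn P hs.2 (fun x hx y hy hxy => (hs.1 hx hy hxy).2)
  · right
    refine my_clique_to_fn (fun i j => ¬ P i j) hs.2 (fun x hx y hy hxy => ?_)
    have := hs.1 hx hy hxy
    rw [SimpleGraph.compl_adj] at this
    exact fun hp => this.2 ⟨hxy, hp⟩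

lemma my_contains_ktkt {V : Type} (G : SimpleGraph V) {t : ℕ} (α β : Fin t → V)
    (hα : Function.Injective α) (hβ : Function.Injective β)
    (hαβ : ∀ i j, α i ≠ β j)
    (hcross : ∀ i j, G.Adj (α i) (β j) ↔ i = j)
    (hαc : ∀ i j, i ≠ j → G.Adj (α i) (α j))
    (hβc : ∀ i j, i ≠ j → G.Adj (β i) (β j)) :
    ContainsInducedIso G (ktkt t) := by
  refine ⟨Sum.elim α β, ?_, ?_⟩
  · intro x y h
    cases x <;> cases y <;> simp only [Sum.elim_inl, Sum.elim_inr] at h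
    · exact congrArg Sum.inl (hα h)
    · exact absurd h (hαβ _ _)
    · exact absurd h.symm (hαβ _ _)
    · exact congrArg Sum.inr (hβ h)
  · rintro (i | i) (j | j) <;>
      simp only [ktkt, SimpleGraph.fromRel_adj, Sum.elim_inl, Sum.elim_inr, ne_eq,
        Sum.inl.injEq, Sum.inr.injEq, reduceCtorEq]
    · constructor
      · rintro ⟨hne, _⟩; exact hαc i j hne
      · intro h; have : i ≠ j := fun he => G.irrefl (he ▸ h); exact ⟨this, Or.inl this⟩
    · constructor
      · rintro ⟨_, h | h⟩
        · exact (hcross i j).2 h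
        · exact h.elim
      · intro h; refine ⟨by trivial, Or.inl ((hcross i j).1 h)⟩
    · constructor
      · rintro ⟨_, h | h⟩
        · exact h.elim
        · exact ((hcross j i).2 h).symm
      · intro h; exact ⟨by trivial, Or.inr ((hcross j i).1 h.symm)⟩
    · constructor
      · rintro ⟨hne, _⟩; exact hβc i j hne
      · intro h; have : i ≠ j := fun he => G.irrefl (he ▸ h); exact ⟨this, Or.inl this⟩

lemma my_contains_ktst {V : Type} (G : SimpleGraph V) {t : ℕ} (α β : Fin t → V)
    (hα : Function.Injective α) (hβ : Function.Injective β)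
    (hαβ : ∀ i j, α i ≠ β j)
    (hcross : ∀ i j, G.Adj (α i) (β j) ↔ i = j)
    (hαc : ∀ i j, i ≠ j → G.Adj (α i) (α j))
    (hβi : ∀ i j, ¬ G.Adj (β i) (β j)) :
    ContainsInducedIso G (ktst t) := by
  refine ⟨Sum.elim α β, ?_, ?_⟩
  · intro x y h
    cases x <;> cases y <;> simp only [Sum.elim_inl, Sum.elim_inr] at h
    · exact congrArg Sum.inl (hα h)
    · exact absurd h (hαβ _ _)
    · exact absurd h.symm (hαβ _ _)
    · exact congrArg Sum.inr (hβ h)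
  · rintro (i | i) (j | j) <;>
      simp only [ktst, SimpleGraph.fromRel_adj, Sum.elim_inl, Sum.elim_inr, ne_eq,
        Sum.inl.injEq, Sum.inr.injEq, reduceCtorEq]
    · constructor
      · rintro ⟨hne, _⟩; exact hαc i j hne
      · intro h; have : i ≠ j := fun he => G.irrefl (he ▸ h); exact ⟨this, Or.inl this⟩
    · constructor
      · rintro ⟨_, h | h⟩
        · exact (hcross i j).2 h
        · exact absurd h (by simp)
      · intro h; exact ⟨by trivial, Or.inl ((hcross i j).1 h)⟩
    · constructor
      · rintro ⟨_, h | h⟩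
        · exact absurd h (by simp)
        · exact ((hcross j i).2 h).symm
      · intro h; exact ⟨by trivial, Or.inr ((hcross j i).1 h.symm)⟩
    · constructor
      · rintro ⟨_, h | h⟩ <;> exact absurd h (by simp)
      · intro h; exact absurd h (hβi i j)


lemma my_sim_zero {V : Type} (G : SimpleGraph V) (A : Set V) : IsSimMatching G A 0 :=
  ⟨Fin.elim0, Fin.elim0, fun i => i.elim0, fun i => i.elim0, fun i => i.elim0,
    fun i => i.elim0, fun i => i.elim0, fun i => i.elim0, fun i => i.elim0⟩

lemma my_mim_zero {V : Type} (G : SimpleGraph V) (A : Set V) : IsMimMatching G A 0 :=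
  ⟨Fin.elim0, Fin.elim0, fun i => i.elim0, fun i => i.elim0, fun i => i.elim0,
    fun i => i.elim0, fun i => i.elim0⟩

lemma my_sim_bdd {V : Type} [Fintype V] (G : SimpleGraph V) (A : Set V) :
    BddAbove {m | IsSimMatching G A m} := by
  refine ⟨Fintype.card V, ?_⟩
  rintro m ⟨a, b, ha, -⟩
  simpa using Fintype.card_le_of_injective a ha

lemma my_simval_le_card {V : Type} [Fintype V] (G : SimpleGraph V) (A : Set V) :
    simval G A ≤ Fintype.card V := by
  refine csSup_le ⟨0, my_sim_zero G A⟩ ?_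
  rintro m ⟨a, b, ha, -⟩
  simpa using Fintype.card_le_of_injective a ha

lemma my_key {V : Type} [Fintype V] (G : SimpleGraph V) (w t : ℕ)
    (h1 : ¬ ContainsInducedIso G (ktkt t)) (h2 : ¬ ContainsInducedIso G (ktst t))
    (A : Set V) (hA : simval G A ≤ w) :
    mimval G A ≤ ramsey (ramsey (w + 1) t) (ramsey t t) := by
  classical
  set k := ramsey (w + 1) t with hk
  set l := ramsey t t with hl
  set N := ramsey k l with hN
  refine csSup_le ⟨0, my_mim_zero G A⟩ ?_
  rintro m ⟨a, b, ha, hb, haA, hbA, hab⟩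
  by_contra hm
  push_neg at hm
  have hNm : N ≤ m := hm.le
  set c : Fin N → Fin m := Fin.castLE hNm with hc
  have hcinj : Function.Injective c := Fin.castLE_injective hNm
  rcases my_ramsey_fn (my_ramseyProp_ramsey k l)
      (fun i j => ¬ G.Adj (a (c i)) (a (c j)))
      (fun i j h hadj => h hadj.symm) with ⟨e, he, hP⟩ | ⟨e, he, hP⟩
  · -- an a-independent set of size k = ramsey (w+1) t
    set d : Fin k → Fin m := fun i => c (e i) with hd
    have hdinj : Function.Injective d := fun i j h => he (hcinj h)
    rcases my_ramsey_fn (my_ramseyProp_ramsey (w + 1) t)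
        (fun i j => ¬ G.Adj (b (d i)) (b (d j)))
        (fun i j h hadj => h hadj.symm) with ⟨e2, he2, hQ⟩ | ⟨e2, he2, hQ⟩
    · -- both sides independent: sim matching of size w+1, contradiction with hA
      set g : Fin (w + 1) → Fin m := fun i => d (e2 i) with hg
      have hginj : Function.Injective g := fun i j h => he2 (hdinj h)
      have hsimm : IsSimMatching G A (w + 1) := by
        refine ⟨fun i => a (g i), fun i => b (g i), fun i j h => hginj (ha h),
          fun i j h => hginj (hb h), fun i => haA _, fun i => hbA _, ?_, ?_, ?_⟩
        · intro i j
          rw [hab]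
          exact ⟨fun h => hginj h, fun h => congrArg g h⟩
        · intro i j
          by_cases hij : i = j
          · subst hij; exact G.irrefl
          · exact hP (e2 i) (e2 j) (fun h => hij (he2 h))
        · intro i j
          by_cases hij : i = j
          · subst hij; exact G.irrefl
          · exact hQ i j hij
      have : w + 1 ≤ simval G A := le_csSup (my_sim_bdd G A) hsimm
      omega
    · -- a-independent, b-clique of size t : K_t ⊠ S_t
      push_neg at hQ
      refine h2 (my_contains_ktst G (fun i => b (d (e2 i))) (fun i => a (d (e2 i)))
        (fun i j h => he2 (hdinj (hb h))) (fun i j h => he2 (hdinj (ha h)))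
        ?_ ?_ ?_ ?_)
      · intro i j h
        have h' : b (d (e2 i)) = a (d (e2 j)) := h
        exact hbA (d (e2 i)) (h' ▸ haA (d (e2 j)))
      · intro i j
        rw [G.adj_comm, hab]
        exact ⟨fun h => (he2 (hdinj h)).symm, fun h => congrArg (fun x => d (e2 x)) h.symm⟩
      · exact hQ
      · intro i j
        by_cases hij : i = j
        · subst hij; exact G.irrefl
        · exact hP (e2 i) (e2 j) (fun h => hij (he2 h))
  · -- an a-clique of size l = ramsey t t
    push_neg at hP
    set d : Fin l → Fin m := fun i => c (e i) with hd
    have hdinj : Function.Injective d := fun i j h => he (hcinj h)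
    rcases my_ramsey_fn (my_ramseyProp_ramsey t t)
        (fun i j => G.Adj (b (d i)) (b (d j)))
        (fun i j h => h.symm) with ⟨e2, he2, hQ⟩ | ⟨e2, he2, hQ⟩
    · -- a-clique, b-clique : K_t ⊠ K_t
      refine h1 (my_contains_ktkt G (fun i => a (d (e2 i))) (fun i => b (d (e2 i)))
        (fun i j h => he2 (hdinj (ha h))) (fun i j h => he2 (hdinj (hb h)))
        ?_ ?_ ?_ ?_)
      · intro i j h
        have h' : a (d (e2 i)) = b (d (e2 j)) := h
        exact hbA (d (e2 j)) (h' ▸ haA (d (e2 i)))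
      · intro i j
        rw [hab]
        exact ⟨fun h => he2 (hdinj h), fun h => congrArg (fun x => d (e2 x)) h⟩
      · intro i j hij
        exact hP (e2 i) (e2 j) (fun h => hij (he2 h))
      · exact hQ
    · -- a-clique, b-independent : K_t ⊠ S_t
      refine h2 (my_contains_ktst G (fun i => a (d (e2 i))) (fun i => b (d (e2 i)))
        (fun i j h => he2 (hdinj (ha h))) (fun i j h => he2 (hdinj (hb h)))
        ?_ ?_ ?_ ?_)
      · intro i j h
        have h' : a (d (e2 i)) = b (d (e2 j)) := h
        exact hbA (d (e2 j)) (h' ▸ haA (d (e2 i)))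
      · intro i j
        rw [hab]
        exact ⟨fun h => he2 (hdinj h), fun h => congrArg (fun x => d (e2 x)) h⟩
      · intro i j hij
        exact hP (e2 i) (e2 j) (fun h => hij (he2 h))
      · intro i j
        by_cases hij : i = j
        · subst hij; exact G.irrefl
        · exact hQ i j hij

/-- every graph of sim-width at most `w` with no induced subgraph
isomorphic to `K_t ⊠ K_t` or `K_t ⊠ S_t` has mim-width at most
`R(R(w+1, t), R(t, t))`, where `R` is the Ramsey number. -/
theorem stmt14 {V : Type} [Fintype V] (G : SimpleGraph V) (w t : ℕ)
    (hsim : simw G ≤ w)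
    (h1 : ¬ ContainsInducedIso G (ktkt t)) (h2 : ¬ ContainsInducedIso G (ktst t)) :
    mimw G ≤ ramsey (ramsey (w + 1) t) (ramsey t t) :=  by
  classical
  by_cases hne : Nonempty (BranchDecomp V)
  · obtain ⟨D₀⟩ := hne
    have hmem : Fintype.card V ∈
        {w' | ∃ D : BranchDecomp V, ∀ x y, D.T.Adj x y → simval G (D.cut x y) ≤ w'} :=
      ⟨D₀, fun x y _ => my_simval_le_card G _⟩
    have hinf := Nat.sInf_mem (Set.nonempty_of_mem hmem)
    obtain ⟨D, hD⟩ := hinf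
    have hDs : ∀ x y, D.T.Adj x y → simval G (D.cut x y) ≤ w := by
      intro x y hxy
      exact le_trans (hD x y hxy) hsim
    exact Nat.sInf_le ⟨D, fun x y hxy => my_key G w t h1 h2 _ (hDs x y hxy)⟩
  · have hempty :
        {w' | ∃ D : BranchDecomp V, ∀ x y, D.T.Adj x y → mimval G (D.cut x y) ≤ w'} = ∅ := by
      ext w'
      simp only [Set.mem_setOf_eq, Set.mem_empty_iff_false, iff_false]
      rintro ⟨D, -⟩
      exact hne ⟨D⟩
    show sInf _ ≤ _
    rw [hempty, Nat.sInf_empty]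
    exact Nat.zero_le _
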